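/- For every integer n ≥ 1, P( Σ_{i=1}^{n} (Δ + Y_i) ≥ Σ_{i=0}^{n} Z_i ) ≤ e^{−A_0·n}; that is, the probability that a private adversary chain with inter-block times (Z_i)_{i=0}^{n} is at least as fast as the worst-case honest chain, whose n depth increments take time Δ + Y_i each, decays exponentially in n with explicit rate A_0. -/

import Mathlib

open MeasureTheory ProbabilityTheory Filter

/-- The Chernoff tilt parameter `s` of Proposition C.4. -/
noncomputable def tiltParam (lambda_h lambda_a Δ : ℝ) : ℝ :=
  (lambda_h - lambda_a) / 2 + (2 - Real.sqrt (4 + Δ ^ 2 * (lambda_a + lambda_h) ^ 2)) / (2 * Δ)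

/-- The exponent `A_0` of Proposition C.4 (with the sign convention making it positive). -/
noncomputable def exponentA0 (lambda_h lambda_a Δ : ℝ) : ℝ :=
  Real.log ((lambda_h - tiltParam lambda_h lambda_a Δ) * (lambda_a + tiltParam lambda_h lambda_a Δ)
      / (lambda_a * lambda_h))
    - tiltParam lambda_h lambda_a Δ * Δ

open Real Set
open scoped ENNReal NNReal

namespace PACB

lemma expPDFReal_eq (r x : ℝ) :
    exponentialPDFReal r x = if 0 ≤ x then r * Real.exp (-(r * x)) else 0 := by
  rw [exponentialPDFReal, gammaPDFReal]
  simp [Real.rpow_one, Real.Gamma_one]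

lemma expMeasure_eq (r : ℝ) :
    expMeasure r = MeasureTheory.volume.withDensity (exponentialPDF r) := rfl

lemma integrable_aux {r t : ℝ} (hr : 0 < r) (ht : t < r) :
    MeasureTheory.Integrable (fun x => Real.exp (t * x) * exponentialPDFReal r x) := by
  have hrt : 0 < r - t := by linarith
  rw [← MeasureTheory.integrableOn_univ, ← Set.Iio_union_Ici (a := (0:ℝ))]
  apply MeasureTheory.IntegrableOn.union
  · refine integrableOn_zero.congr_fun ?_ measurableSet_Iio
    intro x hx
    dsimp only
    rw [expPDFReal_eq, if_neg (not_le.mpr hx), mul_zero]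
  · rw [integrableOn_Ici_iff_integrableOn_Ioi]
    refine MeasureTheory.IntegrableOn.congr_fun
      ((exp_neg_integrableOn_Ioi 0 hrt).const_mul r) ?_ measurableSet_Ioi
    intro x hx
    dsimp only
    rw [expPDFReal_eq, if_pos (le_of_lt hx),
      show Real.exp (t * x) * (r * Real.exp (-(r * x)))
        = r * Real.exp (t * x + -(r * x)) by rw [Real.exp_add]; ring,
      show t * x + -(r * x) = -(r - t) * x by ring]

lemma integrable_exp_expMeasure {r t : ℝ} (hr : 0 < r) (ht : t < r) :
    MeasureTheory.Integrable (fun x => Real.exp (t * x)) (expMeasure r) := by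
  rw [expMeasure_eq,
    show exponentialPDF r = fun x => ENNReal.ofReal (exponentialPDFReal r x) from rfl,
    MeasureTheory.integrable_withDensity_iff
      ((measurable_exponentialPDFReal r).ennreal_ofReal)
      (MeasureTheory.ae_of_all _ fun x => ENNReal.ofReal_lt_top)]
  have h : (fun x => Real.exp (t * x) * (ENNReal.ofReal (exponentialPDFReal r x)).toReal)
      = fun x => Real.exp (t * x) * exponentialPDFReal r x := by
    funext x
    rw [ENNReal.toReal_ofReal (exponentialPDFReal_nonneg hr x)]
  rw [h]
  exact integrable_aux hr ht

lemma integral_exp_expMeasure {r t : ℝ} (hr : 0 < r) (ht : t < r) :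
    ∫ x, Real.exp (t * x) ∂(expMeasure r) = r / (r - t) := by
  have hrt : 0 < r - t := by linarith
  have hd : exponentialPDF r = fun x => (((exponentialPDFReal r x).toNNReal : ℝ≥0) : ℝ≥0∞) := rfl
  rw [expMeasure_eq, hd,
    integral_withDensity_eq_integral_smul
      ((measurable_exponentialPDFReal r).real_toNNReal) _]
  have h : (fun x => (exponentialPDFReal r x).toNNReal • Real.exp (t * x))
      = fun x => exponentialPDFReal r x * Real.exp (t * x) := by
    funext x
    rw [NNReal.smul_def, Real.coe_toNNReal _ (exponentialPDFReal_nonneg hr x), smul_eq_mul]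
  rw [h, ← MeasureTheory.setIntegral_eq_integral_of_forall_compl_eq_zero
      (s := Set.Ici (0:ℝ)) (fun x hx => by
        rw [expPDFReal_eq, if_neg (by simpa using hx), zero_mul]),
    MeasureTheory.integral_Ici_eq_integral_Ioi,
    MeasureTheory.setIntegral_congr_fun measurableSet_Ioi
      (g := fun x => r * Real.exp (-((r - t) * x))) (fun x hx => by
        rw [expPDFReal_eq, if_pos (le_of_lt hx),
          show r * Real.exp (-(r * x)) * Real.exp (t * x)
            = r * Real.exp (-(r * x) + t * x) from by rw [Real.exp_add]; ring,
          show -(r * x) + t * x = -((r - t) * x) from by ring]),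
    MeasureTheory.integral_const_mul]
  have h1 : ∫ x in Set.Ioi (0:ℝ), Real.exp (-((r - t) * x)) = (r - t)⁻¹ := by
    have := MeasureTheory.integral_comp_mul_left_Ioi (fun x => Real.exp (-x)) 0 hrt
    simp only [mul_zero, integral_exp_neg_Ioi_zero, smul_eq_mul, mul_one] at this
    exact this
  rw [h1, div_eq_mul_inv]

lemma mgf_eq_of_map {Ω : Type*} [MeasurableSpace Ω] {P : Measure Ω} {f : Ω → ℝ}
    (hf : Measurable f) {r : ℝ} (hmap : P.map f = expMeasure r) (hr : 0 < r) {t : ℝ}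
    (ht : t < r) :
    mgf f P t = r / (r - t) ∧ Integrable (fun ω => Real.exp (t * f ω)) P := by
  have hmeas : Measurable fun x : ℝ => Real.exp (t * x) := (measurable_id.const_mul t).exp
  constructor
  · rw [mgf, ← MeasureTheory.integral_map hf.aemeasurable hmeas.aestronglyMeasurable, hmap]
    exact integral_exp_expMeasure hr ht
  · have h2 := integrable_exp_expMeasure hr ht
    rw [← hmap] at h2
    exact (MeasureTheory.integrable_map_measure hmeas.aestronglyMeasurable hf.aemeasurable).mp h2

end PACB

open PACB

/-- Let `(Y_i)_{i ≥ 1}` be i.i.d. exponential with rate `λ_h` and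
`(Z_i)_{i ≥ 0}` i.i.d. exponential with rate `λ_a`, the two families independent of each
other (encoded as a single independent family `W` indexed by `ℕ ⊕ ℕ`, with `Y i = W (inl i)`
and `Z i = W (inr i)`). If `λ_a < λ_h / (1 + λ_h Δ)`, then for every `n ≥ 1`,
`P(∑_{i=1}^n (Δ + Y_i) ≥ ∑_{i=0}^n Z_i) ≤ e^{−A_0 n}`. -/
theorem private_attack_catch_up_bound
    {Ω : Type*} [MeasurableSpace Ω] (P : Measure Ω) [IsProbabilityMeasure P]
    (lambda_h lambda_a Δ : ℝ) (hlh : 0 < lambda_h) (hla : 0 < lambda_a) (hΔ : 0 < Δ)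
    (hrate : lambda_a < lambda_h / (1 + lambda_h * Δ))
    (W : ℕ ⊕ ℕ → Ω → ℝ)
    (hmeas : ∀ v, Measurable (W v))
    (hdistY : ∀ i : ℕ, P.map (W (Sum.inl i)) = expMeasure lambda_h)
    (hdistZ : ∀ i : ℕ, P.map (W (Sum.inr i)) = expMeasure lambda_a)
    (hindep : iIndepFun W P)
    (n : ℕ) (hn : 1 ≤ n) :
    P {ω | ∑ i ∈ Finset.range (n + 1), W (Sum.inr i) ω
            ≤ ∑ i ∈ Finset.range n, (Δ + W (Sum.inl i) ω)} ≤
      ENNReal.ofReal (Real.exp (-(exponentA0 lambda_h lambda_a Δ) * n)) := by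
  classical
  set s : ℝ := tiltParam lambda_h lambda_a Δ with hs_def
  set R : ℝ := Real.sqrt (4 + Δ ^ 2 * (lambda_a + lambda_h) ^ 2) with hR_def
  have h1Δ : (0:ℝ) < 1 + lambda_h * Δ := by positivity
  have hd : lambda_a * (1 + lambda_h * Δ) < lambda_h := (lt_div_iff₀ h1Δ).mp hrate
  have hsqrt : R < 2 + (lambda_h - lambda_a) * Δ := by
    rw [hR_def]
    rw [show Real.sqrt (4 + Δ ^ 2 * (lambda_a + lambda_h) ^ 2) < 2 + (lambda_h - lambda_a) * Δ
      ↔ 4 + Δ ^ 2 * (lambda_a + lambda_h) ^ 2 < (2 + (lambda_h - lambda_a) * Δ) ^ 2 from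
      Real.sqrt_lt' (by nlinarith)]
    nlinarith [mul_pos hΔ (sub_pos.mpr hd)]
  have hsqrt2 : (2:ℝ) ≤ R := by
    rw [hR_def, show (2:ℝ) = Real.sqrt 4 by
      rw [show (4:ℝ) = 2 ^ 2 by norm_num, Real.sqrt_sq (by norm_num)]]
    exact Real.sqrt_le_sqrt (by nlinarith)
  have hs_eq : s = ((lambda_h - lambda_a) * Δ + (2 - R)) / (2 * Δ) := by
    rw [hs_def, tiltParam, ← hR_def]; field_simp
  have hs_pos : 0 < s := by
    rw [hs_eq]; apply div_pos (by linarith) (by linarith)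
  have hs_lt : s < lambda_h := by
    have h2 : (2 - R) / (2 * Δ) ≤ 0 :=
      div_nonpos_of_nonpos_of_nonneg (by linarith) (by linarith)
    have : s = (lambda_h - lambda_a) / 2 + (2 - R) / (2 * Δ) := by
      rw [hs_def, tiltParam, ← hR_def]
    rw [this]; linarith
  have hhs : 0 < lambda_h - s := by linarith
  have has : 0 < lambda_a + s := by linarith
  -- the signed family
  set g : ℕ ⊕ ℕ → ℝ → ℝ := Sum.elim (fun _ => fun x => -x) (fun _ => id) with hg_def
  set X : ℕ ⊕ ℕ → Ω → ℝ := fun v => g v ∘ W v with hX_def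
  have hgmeas : ∀ v, Measurable (g v) := by
    rintro (i | i)
    · exact measurable_neg
    · exact measurable_id
  have hXindep : iIndepFun X P := hindep.comp g hgmeas
  have hXmeas : ∀ v, Measurable (X v) := fun v => (hgmeas v).comp (hmeas v)
  have hY : ∀ i : ℕ, mgf (X (Sum.inl i)) P (-s) = lambda_h / (lambda_h - s)
      ∧ Integrable (fun ω => Real.exp (-s * X (Sum.inl i) ω)) P := by
    intro i
    have h := mgf_eq_of_map (hmeas (Sum.inl i)) (hdistY i) hlh (t := s) hs_lt
    constructor
    · rw [show X (Sum.inl i) = -(W (Sum.inl i)) from rfl, mgf_neg, neg_neg, h.1]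
    · have he : (fun ω => Real.exp (-s * X (Sum.inl i) ω))
          = fun ω => Real.exp (s * W (Sum.inl i) ω) := by
        funext ω
        rw [show X (Sum.inl i) ω = -(W (Sum.inl i) ω) from rfl]
        ring_nf
      rw [he]; exact h.2
  have hZ : ∀ i : ℕ, mgf (X (Sum.inr i)) P (-s) = lambda_a / (lambda_a + s)
      ∧ Integrable (fun ω => Real.exp (-s * X (Sum.inr i) ω)) P := by
    intro i
    have h := mgf_eq_of_map (hmeas (Sum.inr i)) (hdistZ i) hla (t := -s) (by linarith)
    have hXr : X (Sum.inr i) = W (Sum.inr i) := rfl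
    constructor
    · rw [hXr, h.1, sub_neg_eq_add]
    · rw [hXr]; exact h.2
  set F : Finset (ℕ ⊕ ℕ) := ((Finset.range n).map ⟨Sum.inl, Sum.inl_injective⟩)
      ∪ ((Finset.range (n + 1)).map ⟨Sum.inr, Sum.inr_injective⟩) with hF_def
  have hdisj : Disjoint ((Finset.range n).map ⟨Sum.inl, Sum.inl_injective⟩)
      ((Finset.range (n + 1)).map ⟨Sum.inr, Sum.inr_injective⟩) := by
    simp only [Finset.disjoint_left, Finset.mem_map, Function.Embedding.coeFn_mk]
    rintro a ⟨i, _, rfl⟩ ⟨j, _, h⟩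
    exact Sum.inl_ne_inr h.symm
  have hint : ∀ v ∈ F, Integrable (fun ω => Real.exp (-s * X v ω)) P := by
    rintro (i | i) _
    · exact (hY i).2
    · exact (hZ i).2
  have hIntS : Integrable (fun ω => Real.exp (-s * (∑ v ∈ F, X v) ω)) P :=
    hXindep.integrable_exp_mul_sum hXmeas hint
  have hset : {ω | ∑ i ∈ Finset.range (n + 1), W (Sum.inr i) ω
      ≤ ∑ i ∈ Finset.range n, (Δ + W (Sum.inl i) ω)}
      = {ω | (∑ v ∈ F, X v) ω ≤ (n : ℝ) * Δ} := by
    ext ω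
    simp only [Set.mem_setOf_eq, Finset.sum_apply, hF_def, Finset.sum_union hdisj,
      Finset.sum_map, Function.Embedding.coeFn_mk]
    rw [Finset.sum_add_distrib, Finset.sum_const, Finset.card_range, nsmul_eq_mul]
    have hXl : ∀ i, X (Sum.inl i) ω = -(W (Sum.inl i) ω) := fun _ => rfl
    have hXr : ∀ i, X (Sum.inr i) ω = W (Sum.inr i) ω := fun _ => rfl
    simp only [hXl, hXr, Finset.sum_neg_distrib]
    constructor <;> intro h <;> linarith
  have hmark := measure_le_le_exp_mul_mgf (μ := P) (X := ∑ v ∈ F, X v) ((n : ℝ) * Δ)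
    (by linarith : -s ≤ 0) hIntS
  rw [hXindep.mgf_sum hXmeas F] at hmark
  have hprod : ∏ v ∈ F, mgf (X v) P (-s)
      = (lambda_h / (lambda_h - s)) ^ n * (lambda_a / (lambda_a + s)) ^ (n + 1) := by
    rw [hF_def, Finset.prod_union hdisj, Finset.prod_map, Finset.prod_map]
    simp only [Function.Embedding.coeFn_mk]
    rw [Finset.prod_congr rfl (fun i _ => (hY i).1),
      Finset.prod_congr rfl (fun i _ => (hZ i).1),
      Finset.prod_const, Finset.prod_const, Finset.card_range, Finset.card_range]
  rw [hprod] at hmark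
  rw [hset, ← ENNReal.ofReal_toReal (measure_ne_top P _)]
  apply ENNReal.ofReal_le_ofReal
  refine hmark.trans ?_
  have hA0 : exponentA0 lambda_h lambda_a Δ
      = Real.log ((lambda_h - s) * (lambda_a + s) / (lambda_a * lambda_h)) - s * Δ := by
    rw [hs_def]; rfl
  have hRR : (0:ℝ) < (lambda_h - s) * (lambda_a + s) / (lambda_a * lambda_h) := by positivity
  have hb1 : lambda_a / (lambda_a + s) ≤ 1 := (div_le_one has).mpr (by linarith)
  have hkey : Real.exp (-(exponentA0 lambda_h lambda_a Δ) * n)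
      = Real.exp (s * ((n : ℝ) * Δ))
        * (lambda_h / (lambda_h - s) * (lambda_a / (lambda_a + s))) ^ n := by
    rw [hA0, show (-(Real.log ((lambda_h - s) * (lambda_a + s) / (lambda_a * lambda_h)) - s * Δ))
        * (n : ℝ) = s * ((n : ℝ) * Δ)
        + (n : ℝ) * (-Real.log ((lambda_h - s) * (lambda_a + s) / (lambda_a * lambda_h))) by ring,
      Real.exp_add]
    congr 1
    rw [Real.exp_nat_mul, Real.exp_neg, Real.exp_log hRR]
    congr 1
    rw [div_mul_div_comm]
    rw [inv_div]
    ring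
  have hstep : Real.exp (-(-s) * ((n : ℝ) * Δ))
      * ((lambda_h / (lambda_h - s)) ^ n * (lambda_a / (lambda_a + s)) ^ (n + 1))
      = (Real.exp (s * ((n : ℝ) * Δ))
        * (lambda_h / (lambda_h - s) * (lambda_a / (lambda_a + s))) ^ n)
        * (lambda_a / (lambda_a + s)) := by
    rw [neg_neg, pow_succ, mul_pow]; ring
  rw [hstep, hkey]
  exact mul_le_of_le_one_right (by positivity) hb1
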